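/- Let q > 2 be odd. Then f_{2,q}(n+1)/f_{2,q}(n) → 1 as n → ∞. -/

import Mathlib

open Filter Real

/-- Number of representations of `n` as a sum of distinct terms of the form `p^a * q^b`. -/
noncomputable def fpq (p q n : ℕ) : ℕ :=
  Set.ncard {S : Finset ℕ | (∀ k ∈ S, ∃ a b : ℕ, k = p ^ a * q ^ b) ∧ S.sum id = n}

section Aux
open Finset

/-- q-ary partition function via recurrence. -/
def bq (q : ℕ) : ℕ → ℕ
  | 0 => 1
  | (n+1) => bq q n + if h : 2 ≤ q ∧ q ∣ (n+1) then bq q ((n+1)/q) else 0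
termination_by n => n
decreasing_by
  · exact Nat.lt_succ_self n
  · exact Nat.div_lt_self (Nat.succ_pos n) h.1

lemma bq_succ {q : ℕ} (hq : 2 ≤ q) (n : ℕ) :
    bq q (n+1) = bq q n + if q ∣ (n+1) then bq q ((n+1)/q) else 0 := by
  rw [bq]
  by_cases h : q ∣ (n+1)
  · rw [dif_pos ⟨hq, h⟩, if_pos h]
  · rw [dif_neg (by tauto), if_neg h]

lemma bq_zero (q : ℕ) : bq q 0 = 1 := by simp [bq]

lemma bq_pos (q n : ℕ) : 1 ≤ bq q n := by
  induction n using Nat.strong_induction_on with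
  | _ n ih =>
    match n with
    | 0 => simp [bq]
    | (n+1) =>
      rw [bq]
      have := ih n (Nat.lt_succ_self n)
      omega

lemma bq_mono {q : ℕ} : Monotone (bq q) := by
  apply monotone_nat_of_le_succ
  intro n
  rw [bq]; omega

lemma bq_not_dvd {q : ℕ} (hq : 2 ≤ q) {n : ℕ} (h : ¬ q ∣ (n+1)) :
    bq q (n+1) = bq q n := by
  rw [bq_succ hq, if_neg h]; ring

lemma bq_dvd {q : ℕ} (hq : 2 ≤ q) {n : ℕ} (h : q ∣ (n+1)) :
    bq q (n+1) = bq q n + bq q ((n+1)/q) := by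
  rw [bq_succ hq, if_pos h]

/-- jump bound -/
lemma bq_le_add {q : ℕ} (hq : 2 ≤ q) (s t : ℕ) (hst : s ≤ t) :
    bq q t ≤ bq q s + (t/q - s/q) * bq q (t/q) := by
  induction t with
  | zero => interval_cases s; simp
  | succ n ih =>
    rcases Nat.eq_or_lt_of_le hst with rfl | hlt
    · simp
    have hsn : s ≤ n := by omega
    have h1 := ih hsn
    have hmono : bq q (n/q) ≤ bq q ((n+1)/q) := bq_mono (Nat.div_le_div_right (by omega))
    have hdivle : s/q ≤ n/q := Nat.div_le_div_right hsn
    have hsd := Nat.succ_div (a := n) (b := q)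
    by_cases h : q ∣ (n+1)
    · rw [bq_dvd hq h]
      rw [if_pos h] at hsd
      have h2 : (n+1)/q - s/q = (n/q - s/q) + 1 := by omega
      rw [h2]
      have : (n / q - s / q) * bq q (n / q) ≤ (n / q - s / q) * bq q ((n+1) / q) :=
        Nat.mul_le_mul_left _ hmono
      nlinarith
    · rw [bq_not_dvd hq h]
      rw [if_neg h] at hsd
      rw [hsd]
      simpa using h1

/-- constancy between multiples -/
lemma bq_const {q : ℕ} (hq : 2 ≤ q) (m r : ℕ) (hr : r < q) :
    bq q (q*m + r) = bq q (q*m) := by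
  induction r with
  | zero => rfl
  | succ r ih =>
    have h : ¬ q ∣ (q*m + r + 1) := by
      rintro ⟨c, hc⟩
      have : q ∣ r + 1 := by
        have : r + 1 = q*c - q*m := by omega
        rw [this]
        exact Nat.dvd_sub (Dvd.intro c rfl) (Dvd.intro m rfl)
      have := Nat.le_of_dvd (by omega) this
      omega
    rw [show q*m + (r+1) = (q*m + r) + 1 by ring, bq_not_dvd hq h, ih (by omega)]

/-- sum identity -/
lemma bq_mul (q : ℕ) (hq : 2 ≤ q) (m : ℕ) :
    bq q (q*m) = 1 + ∑ j ∈ Icc 1 m, bq q j := by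
  induction m with
  | zero => simp [bq]
  | succ m ih =>
    have hqq : q*(m+1) = q*m + q := by ring
    have h1 : q*(m+1) = (q*m + (q-1)) + 1 := by omega
    have hd : q ∣ q*m + (q-1) + 1 := ⟨m+1, by omega⟩
    have h2 : (q*m + (q-1) + 1)/q = m+1 := by
      rw [show q*m + (q-1) + 1 = q*(m+1) by omega]
      exact Nat.mul_div_cancel_left _ (by omega)
    rw [h1, bq_dvd hq hd, h2, bq_const hq m (q-1) (by omega), ih,
      Finset.sum_Icc_succ_top (by omega)]
    ring

noncomputable section
open scoped Classical

def Pw (q n : ℕ) : Set (Finset ℕ) :=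
  {S : Finset ℕ | (∀ k ∈ S, ∃ a b : ℕ, k = 2 ^ a * q ^ b) ∧ S.sum id = n}

lemma Pw_finite (q n : ℕ) : (Pw q n).Finite := by
  apply Set.Finite.subset (Finset.finite_toSet ((Finset.range (n+1)).powerset))
  intro S hS
  rw [Finset.mem_coe, Finset.mem_powerset]
  intro k hk
  rw [Finset.mem_range]
  have h : id k ≤ S.sum id := Finset.single_le_sum (fun i _ => Nat.zero_le _) hk
  rw [hS.2] at h
  exact Nat.lt_succ_of_le h

def twoPart (S : Finset ℕ) : Finset ℕ := S.filter (fun k => ∃ a : ℕ, k = 2^a)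
def rest (S : Finset ℕ) : Finset ℕ := S.filter (fun k => ¬ ∃ a : ℕ, k = 2^a)
def Eset (v : ℕ) : Finset ℕ := (Nat.bitIndices v).toFinset.image (fun a => 2^a)

lemma two_pow_inj : Function.Injective (fun a : ℕ => 2^a) :=
  fun _ _ h => Nat.pow_right_injective (le_refl 2) h

lemma sum_id (S : Finset ℕ) : S.sum id = ∑ x ∈ S, x := rfl

lemma Eset_pow {v k : ℕ} (hk : k ∈ Eset v) : ∃ a : ℕ, k = 2^a := by
  rw [Eset, Finset.mem_image] at hk
  obtain ⟨a, _, rfl⟩ := hk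
  exact ⟨a, rfl⟩

lemma Eset_sum (v : ℕ) : (Eset v).sum id = v := by
  rw [Eset, Finset.sum_image (fun x _ y _ h => two_pow_inj h)]
  simpa using Finset.twoPowSum_toFinset_bitIndices v

lemma Eset_sum_eq {A : Finset ℕ} (hA : ∀ k ∈ A, ∃ a : ℕ, k = 2^a) :
    Eset (A.sum id) = A := by
  set B := A.image (Nat.log 2) with hB
  have hBA : B.image (fun a => 2^a) = A := by
    rw [hB, Finset.image_image]
    have : ∀ k ∈ A, ((fun a => 2^a) ∘ Nat.log 2) k = id k := by
      intro k hk
      obtain ⟨a, rfl⟩ := hA k hk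
      simp [Nat.log_pow (by norm_num : 1 < 2)]
    rw [Finset.image_congr this, Finset.image_id]
  have hsum : A.sum id = ∑ a ∈ B, 2^a := by
    rw [← hBA, Finset.sum_image (fun x _ y _ h => two_pow_inj h)]
    simp
  rw [hsum, Eset, Finset.toFinset_bitIndices_twoPowSum, hBA]

lemma Eset_nonempty {v : ℕ} (hv : v ≠ 0) : (Eset v).Nonempty := by
  rw [Finset.nonempty_iff_ne_empty]
  intro h
  have := Eset_sum v
  rw [h] at this
  simp at this
  omega

lemma tp_union_rest (S : Finset ℕ) : twoPart S ∪ rest S = S :=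
  Finset.filter_union_filter_not_eq _ S

lemma tp_disj_rest (S : Finset ℕ) : Disjoint (twoPart S) (rest S) :=
  Finset.disjoint_filter_filter_not S S _

lemma sum_split (S : Finset ℕ) : S.sum id = (twoPart S).sum id + (rest S).sum id := by
  conv_lhs => rw [← tp_union_rest S]
  exact Finset.sum_union (tp_disj_rest S)

lemma disj_rest_Eset (S : Finset ℕ) (v : ℕ) : Disjoint (rest S) (Eset v) := by
  rw [Finset.disjoint_left]
  intro k hk hk2
  rw [rest, Finset.mem_filter] at hk
  exact hk.2 (Eset_pow hk2)

lemma tp_of_union (S : Finset ℕ) (v : ℕ) : twoPart (rest S ∪ Eset v) = Eset v := by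
  rw [twoPart, Finset.filter_union]
  have h1 : Finset.filter (fun k => ∃ a : ℕ, k = 2^a) (rest S) = ∅ := by
    rw [Finset.filter_eq_empty_iff]
    intro k hk
    rw [rest, Finset.mem_filter] at hk
    exact hk.2
  have h2 : Finset.filter (fun k => ∃ a : ℕ, k = 2^a) (Eset v) = Eset v :=
    Finset.filter_eq_self.2 (fun k hk => Eset_pow hk)
  rw [h1, h2, Finset.empty_union]

lemma rest_of_union (S : Finset ℕ) (v : ℕ) : rest (rest S ∪ Eset v) = rest S := by
  rw [rest, Finset.filter_union]
  have h1 : Finset.filter (fun k => ¬ ∃ a : ℕ, k = 2^a) (rest S) = rest S := by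
    apply Finset.filter_eq_self.2
    intro k hk
    rw [rest, Finset.mem_filter] at hk
    exact hk.2
  have h2 : Finset.filter (fun k => ¬ ∃ a : ℕ, k = 2^a) (Eset v) = ∅ := by
    rw [Finset.filter_eq_empty_iff]
    intro k hk
    exact fun h => h (Eset_pow hk)
  rw [h1, h2, Finset.union_empty]

end

noncomputable section
open scoped Classical

def phi (S : Finset ℕ) : Finset ℕ := rest S ∪ Eset ((twoPart S).sum id + 1)

def mu (q : ℕ) (T : Finset ℕ) : Finset ℕ := T.image (fun k => q * k)

lemma tp_pows (S : Finset ℕ) : ∀ k ∈ twoPart S, ∃ a : ℕ, k = 2^a :=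
  fun k hk => (Finset.mem_filter.1 hk).2

lemma phi_inj : Function.Injective phi := by
  intro S S' h
  have h1 : rest S = rest S' := by
    rw [← rest_of_union S ((twoPart S).sum id + 1), ← rest_of_union S' ((twoPart S').sum id + 1),
      ← phi, ← phi, h]
  have h2 : Eset ((twoPart S).sum id + 1) = Eset ((twoPart S').sum id + 1) := by
    rw [← tp_of_union S ((twoPart S).sum id + 1), ← tp_of_union S' ((twoPart S').sum id + 1),
      ← phi, ← phi, h]
  have h3 : (twoPart S).sum id + 1 = (twoPart S').sum id + 1 := by
    rw [← Eset_sum ((twoPart S).sum id + 1), h2, Eset_sum]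
  have h4 : twoPart S = twoPart S' := by
    rw [← Eset_sum_eq (tp_pows S), ← Eset_sum_eq (tp_pows S')]
    congr 1
    omega
  rw [← tp_union_rest S, ← tp_union_rest S', h4, h1]

lemma phi_mem {q n : ℕ} {S : Finset ℕ} (hS : S ∈ Pw q n) :
    phi S ∈ Pw q (n+1) ∧ (twoPart (phi S)).Nonempty := by
  obtain ⟨hmem, hsum⟩ := hS
  have hd := disj_rest_Eset S ((twoPart S).sum id + 1)
  refine ⟨⟨?_, ?_⟩, ?_⟩
  · intro k hk
    rcases Finset.mem_union.1 hk with hk | hk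
    · exact hmem k (Finset.mem_of_mem_filter k hk)
    · obtain ⟨a, rfl⟩ := Eset_pow hk
      exact ⟨a, 0, by simp⟩
  · rw [phi, Finset.sum_union hd, Eset_sum]
    have h := sum_split S
    simp only [sum_id, id_eq] at h hsum ⊢
    omega
  · rw [phi, tp_of_union]
    exact Eset_nonempty (by omega)

lemma phi_surj {q n : ℕ} {S' : Finset ℕ} (hS' : S' ∈ Pw q (n+1))
    (hne : (twoPart S').Nonempty) : ∃ S ∈ Pw q n, phi S = S' := by
  obtain ⟨hmem, hsum⟩ := hS'
  set v := (twoPart S').sum id with hv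
  have hv1 : 1 ≤ v := by
    obtain ⟨k, hk⟩ := hne
    have hk1 : 1 ≤ k := by
      obtain ⟨a, rfl⟩ := tp_pows S' k hk
      exact Nat.one_le_two_pow
    have h := Finset.single_le_sum (f := id) (fun i _ => Nat.zero_le _) hk
    simp only [sum_id, id_eq] at h hv
    omega
  have hsplit := sum_split S'
  refine ⟨rest S' ∪ Eset (v - 1), ⟨?_, ?_⟩, ?_⟩
  · intro k hk
    rcases Finset.mem_union.1 hk with hk | hk
    · exact hmem k (Finset.mem_of_mem_filter k hk)
    · obtain ⟨a, rfl⟩ := Eset_pow hk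
      exact ⟨a, 0, by simp⟩
  · rw [Finset.sum_union (disj_rest_Eset _ _), Eset_sum]
    simp only [sum_id, id_eq] at hsplit hsum hv ⊢
    omega
  · rw [phi, rest_of_union, tp_of_union, Eset_sum, show v - 1 + 1 = v by omega]
    have hE : Eset v = twoPart S' := by
      rw [hv]
      exact Eset_sum_eq (tp_pows S')
    rw [hE, Finset.union_comm, tp_union_rest]

lemma mul_q_inj {q : ℕ} (hq : 2 < q) : Function.Injective (fun k : ℕ => q * k) :=
  fun a b h => Nat.eq_of_mul_eq_mul_left (by omega) h

lemma mu_mem {q : ℕ} (hq : 2 < q) (hodd : Odd q) {m : ℕ} {T : Finset ℕ} (hT : T ∈ Pw q m) :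
    mu q T ∈ Pw q (q*m) ∧ ¬ (twoPart (mu q T)).Nonempty := by
  obtain ⟨hmem, hsum⟩ := hT
  refine ⟨⟨?_, ?_⟩, ?_⟩
  · intro k hk
    obtain ⟨x, hx, rfl⟩ := Finset.mem_image.1 hk
    obtain ⟨a, b, rfl⟩ := hmem x hx
    exact ⟨a, b+1, by ring⟩
  · rw [mu, Finset.sum_image (fun x _ y _ h => mul_q_inj hq h)]
    simp only [id_eq] at hsum ⊢
    rw [← Finset.mul_sum, hsum]
  · rintro ⟨k, hk⟩
    rw [twoPart, Finset.mem_filter] at hk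
    obtain ⟨hk1, a, ha⟩ := hk
    obtain ⟨x, hx, rfl⟩ := Finset.mem_image.1 hk1
    have hdvd : q ∣ 2^a := ⟨x, ha.symm⟩
    have hcop : Nat.Coprime q (2^a) :=
      Nat.Coprime.pow_right a (Nat.coprime_two_right.2 hodd)
    have := Nat.Coprime.eq_one_of_dvd hcop hdvd
    omega

lemma mu_surj {q : ℕ} (hq : 2 < q) {N : ℕ} {S' : Finset ℕ} (hS' : S' ∈ Pw q N)
    (hne : ¬ (twoPart S').Nonempty) :
    q ∣ N ∧ ∃ T ∈ Pw q (N/q), mu q T = S' := by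
  obtain ⟨hmem, hsum⟩ := hS'
  have hqk : ∀ k ∈ S', q ∣ k := by
    intro k hk
    obtain ⟨a, b, rfl⟩ := hmem k hk
    rcases Nat.eq_zero_or_pos b with rfl | hb
    · exact absurd ⟨2^a * q^0, Finset.mem_filter.2 ⟨hk, a, by simp⟩⟩ hne
    · exact Dvd.dvd.mul_left (dvd_pow_self q (by omega)) _
  have hdvdN : q ∣ N := by
    rw [← hsum]
    exact Finset.dvd_sum (fun k hk => hqk k hk)
  refine ⟨hdvdN, S'.image (fun k => k / q), ⟨?_, ?_⟩, ?_⟩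
  · intro k hk
    obtain ⟨x, hx, rfl⟩ := Finset.mem_image.1 hk
    obtain ⟨a, b, hab⟩ := hmem x hx
    rcases Nat.eq_zero_or_pos b with rfl | hb
    · exact absurd ⟨x, Finset.mem_filter.2 ⟨hx, a, by simpa using hab⟩⟩ hne
    · obtain ⟨b', rfl⟩ : ∃ b', b = b' + 1 := ⟨b - 1, by omega⟩
      refine ⟨a, b', ?_⟩
      rw [hab, show 2^a * q^(b'+1) = q * (2^a * q^b') by ring,
        Nat.mul_div_cancel_left _ (by omega : 0 < q)]
  · have hinj : ∀ x ∈ S', ∀ y ∈ S', x / q = y / q → x = y := by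
      intro x hx y hy hxy
      rw [← Nat.mul_div_cancel' (hqk x hx), ← Nat.mul_div_cancel' (hqk y hy), hxy]
    rw [Finset.sum_image hinj]
    have hqmul : q * (∑ x ∈ S', x / q) = N := by
      rw [Finset.mul_sum, ← hsum]
      apply Finset.sum_congr rfl
      intro x hx
      simp only [id_eq]
      exact Nat.mul_div_cancel' (hqk x hx)
    simp only [id_eq]
    exact Nat.div_eq_of_eq_mul_left (by omega) (by rw [← hqmul]; ring) |>.symm
  · rw [mu, Finset.image_image]
    have : ∀ k ∈ S', ((fun k => q * k) ∘ (fun k => k / q)) k = id k := by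
      intro k hk
      simp only [Function.comp_apply, id_eq]
      exact Nat.mul_div_cancel' (hqk k hk)
    rw [Finset.image_congr this, Finset.image_id]

lemma Pw_zero {q : ℕ} (hq : 2 < q) : Pw q 0 = {(∅ : Finset ℕ)} := by
  ext S
  simp only [Pw, Set.mem_setOf_eq, Set.mem_singleton_iff]
  constructor
  · rintro ⟨hmem, hsum⟩
    rw [Finset.eq_empty_iff_forall_notMem]
    intro k hk
    obtain ⟨a, b, rfl⟩ := hmem k hk
    have hpos : 0 < 2^a * q^b := Nat.mul_pos (pow_pos (by omega) a)
      (pow_pos (by omega) b)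
    have h := Finset.single_le_sum (f := id) (fun i _ => Nat.zero_le _) hk
    rw [hsum] at h
    simp only [id_eq] at h
    omega
  · rintro rfl
    exact ⟨fun k hk => absurd hk (Finset.notMem_empty k), rfl⟩

lemma Pw_card {q : ℕ} (hq : 2 < q) (hodd : Odd q) (n : ℕ) : (Pw q n).ncard = bq q n := by
  induction n using Nat.strong_induction_on with
  | _ n IH =>
  match n with
  | 0 => rw [Pw_zero hq, Set.ncard_singleton, bq_zero]
  | (n+1) =>
    set P2 : Set (Finset ℕ) := {S | S ∈ Pw q (n+1) ∧ (twoPart S).Nonempty} with hP2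
    set P0 : Set (Finset ℕ) := {S | S ∈ Pw q (n+1) ∧ ¬ (twoPart S).Nonempty} with hP0
    have hsplit : Pw q (n+1) = P2 ∪ P0 := by
      ext S
      constructor
      · intro h
        by_cases hh : (twoPart S).Nonempty
        · exact Or.inl ⟨h, hh⟩
        · exact Or.inr ⟨h, hh⟩
      · rintro (h | h) <;> exact h.1
    have h2sub : P2 ⊆ Pw q (n+1) := fun S h => h.1
    have h0sub : P0 ⊆ Pw q (n+1) := fun S h => h.1
    have h2fin := (Pw_finite q (n+1)).subset h2sub
    have h0fin := (Pw_finite q (n+1)).subset h0sub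
    have hdisj : Disjoint P2 P0 := by
      rw [Set.disjoint_left]
      rintro S ⟨_, h⟩ ⟨_, h'⟩
      exact h' h
    have hA : P2.ncard = bq q n := by
      have himg : P2 = phi '' (Pw q n) := by
        ext S'
        constructor
        · rintro ⟨hS', hne⟩
          obtain ⟨S, hS, hphi⟩ := phi_surj hS' hne
          exact ⟨S, hS, hphi⟩
        · rintro ⟨S, hS, rfl⟩
          exact phi_mem hS
      rw [himg, Set.ncard_image_of_injective _ phi_inj]
      exact IH n (Nat.lt_succ_self n)
    have hB : P0.ncard = if q ∣ (n+1) then bq q ((n+1)/q) else 0 := by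
      by_cases hdvd : q ∣ (n+1)
      · rw [if_pos hdvd]
        have himg : P0 = mu q '' (Pw q ((n+1)/q)) := by
          ext S'
          constructor
          · rintro ⟨hS', hne⟩
            obtain ⟨_, T, hT, hmu⟩ := mu_surj hq hS' hne
            exact ⟨T, hT, hmu⟩
          · rintro ⟨T, hT, rfl⟩
            have h := mu_mem hq hodd hT
            rw [Nat.mul_div_cancel' hdvd] at h
            exact h
        have hmuinj : Function.Injective (mu q) :=
          fun a b h => Finset.image_injective (mul_q_inj hq) h
        rw [himg]
        exact (Set.ncard_image_of_injective _ hmuinj).trans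
          (IH _ (Nat.div_lt_self (Nat.succ_pos n) (by omega)))
      · rw [if_neg hdvd]
        have hempty : P0 = ∅ := by
          ext S'
          simp only [hP0, Set.mem_setOf_eq, Set.mem_empty_iff_false, iff_false, not_and]
          intro hS' hne
          exact hdvd (mu_surj hq hS' hne).1
        rw [hempty, Set.ncard_empty]
    rw [hsplit, Set.ncard_union_eq hdisj h2fin h0fin, hA, hB, bq_succ (by omega) n]

end

lemma div_add_le  (hq : 0 < q) (a b : ℕ) : (a+b)/q ≤ a/q + b/q + 1 := by
  have ha := Nat.div_add_mod a q
  have hb := Nat.div_add_mod b q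
  have ha' : a % q < q := Nat.mod_lt _ hq
  have hb' : b % q < q := Nat.mod_lt _ hq
  have h : a + b < (a/q + b/q + 2) * q := by nlinarith
  have := (Nat.div_lt_iff_lt_mul hq).2 h
  omega

lemma bq_key (hq : 2 < q) (k : ℕ) (hk : 1 ≤ k) :
    ∃ N, ∀ n ≥ N, k * bq q (n+1) ≤ (k+2) * bq q n := by
  have hq2 : 2 ≤ q := le_of_lt hq
  refine ⟨q * (2*k*(k+1) + q + k + 2), fun n hn => ?_⟩
  by_cases hdvd : q ∣ (n+1)
  swap
  · rw [bq_not_dvd hq2 hdvd]; exact Nat.mul_le_mul_right _ (by omega)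
  set t := (n+1)/q with ht
  have htq : q * t = n + 1 := Nat.mul_div_cancel' hdvd
  set A := 2*k*(k+1) + q + k + 2 with hA
  have htA : A < t := by
    have : q * A < q * t := by omega
    exact Nat.lt_of_mul_lt_mul_left this
  clear_value t A
  have htbig : 2*k*(k+1) + q + k + 2 < t := by omega
  -- (b)
  set S := ∑ j ∈ Icc 1 (t-1), bq q j with hS
  have hbn : 1 + S ≤ bq q n := by
    have h1 : bq q (q*(t-1)) = 1 + S := bq_mul q hq2 (t-1)
    have h2 : q*(t-1) ≤ n := by
      have hmul : q * (t-1) + q = q * t := by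
        rw [← Nat.mul_succ]
        congr 1
        omega
      omega
    calc 1 + S = bq q (q*(t-1)) := h1.symm
      _ ≤ bq q n := bq_mono h2
  set K := k/q + 1 with hK
  -- (c)
  have hc : k * bq q t ≤ S + k * (K * bq q (t/q)) := by
    have hcard : (Icc (t-k) (t-1)).card = k := by
      rw [Nat.card_Icc]; omega
    have hterm : ∀ j ∈ Icc (t-k) (t-1), bq q t ≤ bq q j + K * bq q (t/q) := by
      intro j hj
      rw [mem_Icc] at hj
      have hjt : j ≤ t := by omega
      have hdiv : t/q ≤ j/q + K := by
        have h1 : t/q ≤ (j+k)/q := Nat.div_le_div_right (by omega)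
        have h2 := div_add_le (show 0 < q by omega) j k
        refine h1.trans (h2.trans_eq ?_)
        rw [hK]
        ring
      calc bq q t ≤ bq q j + (t/q - j/q) * bq q (t/q) := bq_le_add hq2 j t hjt
        _ ≤ bq q j + K * bq q (t/q) :=
          Nat.add_le_add_left (Nat.mul_le_mul_right _
            (tsub_le_iff_right.2 (hdiv.trans_eq (add_comm _ _)))) _
    calc k * bq q t = ∑ _j ∈ Icc (t-k) (t-1), bq q t := by rw [sum_const, hcard]; ring
      _ ≤ ∑ j ∈ Icc (t-k) (t-1), (bq q j + K * bq q (t/q)) := sum_le_sum hterm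
      _ = (∑ j ∈ Icc (t-k) (t-1), bq q j) + k * (K * bq q (t/q)) := by
          rw [sum_add_distrib, sum_const, hcard]; ring
      _ ≤ S + k * (K * bq q (t/q)) := by
          gcongr
          exact sum_le_sum_of_subset (Icc_subset_Icc (by omega) (le_refl _))
  -- (d)
  have hd : k * (K * bq q (t/q)) ≤ S := by
    have hkK : k * K ≤ t - t/q := by
      have h1 : K ≤ k + 1 := by
        have : k/q ≤ k := Nat.div_le_self _ _
        omega
      have h2 : t/q ≤ t/2 := Nat.div_le_div_left hq2 (by omega)
      have h3 : (2*(k*(k+1)))/2 ≤ t/2 := Nat.div_le_div_right (by nlinarith)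
      have h4 : (2*(k*(k+1)))/2 = k*(k+1) := by omega
      have h5 : k * K ≤ k * (k+1) := Nat.mul_le_mul_left _ h1
      omega
    have hsub : Icc (t/q) (t-1) ⊆ Icc 1 (t-1) := by
      apply Icc_subset_Icc _ (le_refl _)
      rw [Nat.one_le_div_iff (by omega)]
      omega
    have hlow : (t - t/q) * bq q (t/q) ≤ S := by
      have hcard2 : (Icc (t/q) (t-1)).card = t - t/q := by
        rw [Nat.card_Icc]
        have : t/q < t := Nat.div_lt_self (by omega) (by omega)
        omega
      calc (t - t/q) * bq q (t/q) = ∑ _j ∈ Icc (t/q) (t-1), bq q (t/q) := by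
            rw [sum_const, hcard2]; ring
        _ ≤ ∑ j ∈ Icc (t/q) (t-1), bq q j := by
            apply sum_le_sum
            intro j hj
            rw [mem_Icc] at hj
            exact bq_mono hj.1
        _ ≤ S := sum_le_sum_of_subset hsub
    calc k * (K * bq q (t/q)) = (k * K) * bq q (t/q) := by ring
      _ ≤ (t - t/q) * bq q (t/q) := Nat.mul_le_mul_right _ hkK
      _ ≤ S := hlow
  -- combine
  have hkey : k * bq q t ≤ 2 * bq q n := by omega
  rw [bq_dvd hq2 hdvd, ← ht]
  calc k * (bq q n + bq q t) = k * bq q n + k * bq q t := by ring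
    _ ≤ k * bq q n + 2 * bq q n := by omega
    _ = (k+2) * bq q n := by ring

lemma bq_tendsto (hq : 2 < q) :
    Tendsto (fun n : ℕ => (bq q (n+1) : ℝ) / (bq q n)) atTop (nhds 1) := by
  rw [Metric.tendsto_atTop]
  intro ε hε
  obtain ⟨k, hk⟩ := exists_nat_gt (2/ε)
  have hk0 : 0 < k := by
    have : 0 ≤ 2/ε := by positivity
    exact_mod_cast this.trans_lt hk
  have hkε : 2 / (k : ℝ) < ε := by
    rw [div_lt_iff₀ (by exact_mod_cast hk0)]
    rw [div_lt_iff₀ hε] at hk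
    linarith [mul_comm ε (k:ℝ)]
  obtain ⟨N, hN⟩ := bq_key hq k hk0
  refine ⟨N, fun n hn => ?_⟩
  have hb0 : (0:ℝ) < bq q n := by exact_mod_cast bq_pos q n
  have hmono : (bq q n : ℝ) ≤ bq q (n+1) := by exact_mod_cast bq_mono (Nat.le_succ n)
  have hratio1 : 1 ≤ (bq q (n+1) : ℝ) / bq q n := (one_le_div hb0).2 hmono
  have hub : (bq q (n+1) : ℝ) / bq q n ≤ 1 + 2/k := by
    rw [div_le_iff₀ hb0]
    have := hN n hn
    have hcast : (k : ℝ) * bq q (n+1) ≤ (k+2) * bq q n := by exact_mod_cast this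
    have hk0' : (0:ℝ) < k := by exact_mod_cast hk0
    have h2 : (1 + 2/(k:ℝ)) * bq q n = ((k:ℝ)+2) * bq q n / k := by
      field_simp
    rw [h2, le_div_iff₀ hk0']
    nlinarith [hcast]
  rw [Real.dist_eq, abs_of_nonneg (by linarith)]
  linarith

end Aux

theorem stmt14 (q : ℕ) (hq : 2 < q) (hodd : Odd q) :
    Filter.Tendsto (fun n : ℕ => (fpq 2 q (n + 1) : ℝ) / (fpq 2 q n))
      Filter.atTop (nhds 1) := by
  have hf : ∀ n, fpq 2 q n = bq q n := fun n => by
    rw [show fpq 2 q n = (Pw q n).ncard from rfl]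
    exact Pw_card hq hodd n
  simp only [hf]
  exact bq_tendsto hq
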